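/- Let G be a finite simple graph, a, b two nonadjacent vertices of G, and G' = G + (a,b). If an edge e' of G satisfies φ_{G'}(e') = φ_G(e') + 1, then there exists a (φ_G(e')+1)-truss of G' that contains both e' and the inserted edge (a,b). -/

import Mathlib

open SimpleGraph

variable {V : Type*}

/-- `H` is a `k`-truss of `G`: a connected subgraph with at least one edge in which
every edge lies in at least `k - 2` triangles of `H` (i.e. the endpoints of every edge
have at least `k - 2` common neighbors in `H`). -/
def IsTruss (G : SimpleGraph V) (k : ℕ) (H : G.Subgraph) : Prop :=
  H.Connected ∧ H.edgeSet.Nonempty ∧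
    ∀ a b : V, H.Adj a b → k - 2 ≤ {c : V | H.Adj a c ∧ H.Adj b c}.ncard

/-- The truss number `φ_G(e)` of an edge `e`: the largest `k` such that `e` lies in some
`k`-truss of `G`. -/
noncomputable def trussNumber (G : SimpleGraph V) (e : Sym2 V) : ℕ :=
  sSup {k : ℕ | ∃ H : G.Subgraph, IsTruss G k H ∧ e ∈ H.edgeSet}

/-- The support of the edge `(a, b)` in a subgraph `H`: the number of triangles of `H`
containing it, i.e. the number of common neighbors of `a` and `b` in `H`. -/
noncomputable def suppIn {G : SimpleGraph V} (H : G.Subgraph) (a b : V) : ℕ :=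
  {c : V | H.Adj a c ∧ H.Adj b c}.ncard

/-- The support of the edge `(a, b)` in `G`. -/
noncomputable def suppG (G : SimpleGraph V) (a b : V) : ℕ :=
  {c : V | G.Adj a c ∧ G.Adj b c}.ncard

/-- `S_{a,b}`: the common neighbors of `a` and `b` in `G`. -/
def commonNbrs (G : SimpleGraph V) (a b : V) : Set V :=
  {c : V | G.Adj a c ∧ G.Adj b c}

/-- `E_{S_{a,b} ↔ {a,b}}`: the edges of `G` joining a common neighbor of `a` and `b`
to `a` or to `b`. -/
def sideEdges (G : SimpleGraph V) (a b : V) : Set (Sym2 V) :=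
  {e | ∃ c, G.Adj a c ∧ G.Adj b c ∧ (e = s(a, c) ∨ e = s(b, c))}

/-- `k_min((a,b))`: minimum truss number among the edges of `E_{S_{a,b} ↔ {a,b}}`. -/
noncomputable def kmin (G : SimpleGraph V) (a b : V) : ℕ :=
  sInf (trussNumber G '' sideEdges G a b)

/-- `k_max((a,b))`: maximum truss number among the edges of `E_{S_{a,b} ↔ {a,b}}`. -/
noncomputable def kmax (G : SimpleGraph V) (a b : V) : ℕ :=
  sSup (trussNumber G '' sideEdges G a b)

/-- `G + (a,b)`: the graph obtained from `G` by inserting the edge `(a, b)`. -/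
def insertEdge (G : SimpleGraph V) (a b : V) : SimpleGraph V :=
  G ⊔ fromEdgeSet {s(a, b)}

lemma truss_bddAbove [Fintype V] (G : SimpleGraph V) (e : Sym2 V) :
    BddAbove {k : ℕ | ∃ H : G.Subgraph, IsTruss G k H ∧ e ∈ H.edgeSet} := by
  refine ⟨Fintype.card V + 2, ?_⟩
  rintro k ⟨H, ⟨hconn, ⟨e0, he0⟩, hsupp⟩, he⟩
  induction e0 using Sym2.ind with
  | _ x y =>
    have h1 := hsupp x y (Subgraph.mem_edgeSet.mp he0)
    have h2 : {c : V | H.Adj x c ∧ H.Adj y c}.ncard ≤ Fintype.card V := by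
      have := Set.ncard_le_ncard (Set.subset_univ {c : V | H.Adj x c ∧ H.Adj y c})
        Set.finite_univ
      simpa [Set.ncard_univ] using this
    omega

theorem stmt8 [Fintype V] (G : SimpleGraph V) (a b : V) (hab : a ≠ b)
    (hnadj : ¬ G.Adj a b) (e' : Sym2 V) (he' : e' ∈ G.edgeSet)
    (h : trussNumber (insertEdge G a b) e' = trussNumber G e' + 1) :
    ∃ H : (insertEdge G a b).Subgraph,
      IsTruss (insertEdge G a b) (trussNumber G e' + 1) H ∧
      e' ∈ H.edgeSet ∧ s(a, b) ∈ H.edgeSet := by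
  have hbdd := truss_bddAbove (insertEdge G a b) e'
  have hne : {k : ℕ | ∃ H : (insertEdge G a b).Subgraph,
      IsTruss (insertEdge G a b) k H ∧ e' ∈ H.edgeSet}.Nonempty := by
    by_contra hcon
    rw [Set.not_nonempty_iff_eq_empty] at hcon
    have h0 : trussNumber (insertEdge G a b) e' = 0 := by
      rw [trussNumber, hcon]; simp
    omega
  have hmem := Nat.sSup_mem hne hbdd
  rw [show sSup {k : ℕ | ∃ H : (insertEdge G a b).Subgraph,
      IsTruss (insertEdge G a b) k H ∧ e' ∈ H.edgeSet}
      = trussNumber (insertEdge G a b) e' from rfl, h] at hmem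
  obtain ⟨H, htr, he'H⟩ := hmem
  refine ⟨H, htr, he'H, ?_⟩
  by_contra hnab
  have hadj : ∀ x y : V, H.Adj x y → G.Adj x y := by
    intro x y hxy
    rcases H.adj_sub hxy with h1 | h2
    · exact h1
    · exfalso
      rw [fromEdgeSet_adj] at h2
      apply hnab
      rw [Set.mem_singleton_iff] at h2
      rw [← h2.1]
      exact Subgraph.mem_edgeSet.mpr hxy
  let H' : G.Subgraph :=
    ⟨H.verts, H.Adj, fun hxy => hadj _ _ hxy, fun hxy => H.edge_vert hxy,
      H.symm⟩
  have hmem' : trussNumber G e' + 1 ∈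
      {k : ℕ | ∃ K : G.Subgraph, IsTruss G k K ∧ e' ∈ K.edgeSet} := by
    have hc : H'.Connected := ⟨htr.1.coe⟩
    exact ⟨H', ⟨hc, htr.2.1, htr.2.2⟩, he'H⟩
  have hle : trussNumber G e' + 1 ≤ trussNumber G e' :=
    le_csSup (truss_bddAbove G e') hmem'
  omega
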